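/- For every positive integer n and every symmetric real n×n matrix T, the operator norm of the matrix tr(T)·T − T·T is at most (√(n−1)/2) times the square of the Frobenius norm of T, i.e. ‖tr(T)·T − T²‖ ≤ (√(n−1)/2)·|T|², where ‖·‖ denotes the ℓ²→ℓ² operator norm and |T|² = tr(T·Tᵀ). -/

import Mathlib

open Matrix Finset

lemma key_ineq {n : ℕ} (lam : Fin n → ℝ) (i : Fin n) :
    |(∑ j, lam j) * lam i - lam i ^ 2| ≤ Real.sqrt ((n : ℝ) - 1) / 2 * ∑ j, lam j ^ 2 := by
  have hmem : i ∈ (univ : Finset (Fin n)) := mem_univ i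
  have h1 : (∑ j, lam j) * lam i - lam i ^ 2
      = lam i * (∑ j ∈ univ.erase i, lam j) := by
    rw [Finset.sum_erase_eq_sub hmem]; ring
  set S := ∑ j ∈ univ.erase i, lam j ^ 2 with hS
  have hS0 : 0 ≤ S := Finset.sum_nonneg fun j _ => sq_nonneg _
  have hcard : ((univ.erase i).card : ℝ) = (n : ℝ) - 1 := by
    rw [Finset.card_erase_of_mem hmem, Finset.card_univ, Fintype.card_fin]
    have hn : 1 ≤ n := i.pos
    push_cast [hn]; ring
  have hcs : (∑ j ∈ univ.erase i, lam j) ^ 2 ≤ ((n : ℝ) - 1) * S := by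
    have := sq_sum_le_card_mul_sum_sq (s := univ.erase i) (f := lam)
    rwa [hcard] at this
  have habs : |∑ j ∈ univ.erase i, lam j| ≤ Real.sqrt ((n : ℝ) - 1) * Real.sqrt S := by
    rw [← Real.sqrt_mul (by
      have : (0:ℝ) ≤ ((univ.erase i).card : ℝ) := Nat.cast_nonneg _
      linarith [hcard]) S]
    exact (Real.abs_le_sqrt hcs)
  have hsum : lam i ^ 2 + S = ∑ j, lam j ^ 2 := by
    rw [hS, Finset.sum_erase_eq_sub hmem]; ring
  have hamgm : |lam i| * Real.sqrt S ≤ (lam i ^ 2 + S) / 2 := by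
    nlinarith [sq_nonneg (|lam i| - Real.sqrt S), Real.sq_sqrt hS0, sq_abs (lam i)]
  calc |(∑ j, lam j) * lam i - lam i ^ 2|
      = |lam i| * |∑ j ∈ univ.erase i, lam j| := by rw [h1, abs_mul]
    _ ≤ |lam i| * (Real.sqrt ((n : ℝ) - 1) * Real.sqrt S) :=
        mul_le_mul_of_nonneg_left habs (abs_nonneg _)
    _ = Real.sqrt ((n : ℝ) - 1) * (|lam i| * Real.sqrt S) := by ring
    _ ≤ Real.sqrt ((n : ℝ) - 1) * ((lam i ^ 2 + S) / 2) :=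
        mul_le_mul_of_nonneg_left hamgm (Real.sqrt_nonneg _)
    _ = Real.sqrt ((n : ℝ) - 1) / 2 * ∑ j, lam j ^ 2 := by rw [← hsum]; ring

/-- For every positive integer `n` and every symmetric real `n × n`
matrix `T`, the `ℓ² → ℓ²` operator norm of `tr(T)·T − T²` is at most
`(√(n−1)/2)` times the square of the Frobenius norm of `T`, where the square of the
Frobenius norm is `tr (T * Tᵀ)`. -/
theorem statement0 (n : ℕ) (hn : 0 < n) (T : Matrix (Fin n) (Fin n) ℝ) (hT : T.IsSymm) :
    ‖Matrix.toEuclideanCLM (𝕜 := ℝ) (T.trace • T - T * T)‖ ≤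
      (Real.sqrt ((n : ℝ) - 1) / 2) * (T * Tᵀ).trace := by
  classical
  have hT' : T.IsHermitian := by
    rw [Matrix.IsHermitian, conjTranspose]
    exact Matrix.isHermitian_iff_isSymm.mpr hT
  set U : Matrix (Fin n) (Fin n) ℝ := (hT'.eigenvectorUnitary : Matrix (Fin n) (Fin n) ℝ)
    with hUdef
  set lam := hT'.eigenvalues with hlam
  have hU1 : star U * U = 1 := Unitary.coe_star_mul_self _
  have hU2 : U * star U = 1 := Unitary.coe_mul_star_self _
  have hdiag : diagonal (RCLike.ofReal ∘ lam) = diagonal lam := by congr 1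
  have hD : star U * T * U = diagonal lam := by
    have := hT'.conjStarAlgAut_star_eigenvectorUnitary
    rw [Unitary.conjStarAlgAut_star_apply] at this
    exact this.trans hdiag
  have tr1 : T.trace = ∑ i, lam i := by
    have h : trace (star U * T * U) = trace T := by
      rw [Matrix.trace_mul_cycle, hU2, Matrix.one_mul]
    rw [← h, hD, trace_diagonal]
  have tr2 : (T * Tᵀ).trace = ∑ i, lam i ^ 2 := by
    have hTT : Tᵀ = T := hT
    have e1 : diagonal lam * diagonal lam = star U * (T * T * U) := by
      rw [← hD]
      simp only [Matrix.mul_assoc]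
      rw [← Matrix.mul_assoc U (star U) (T * U), hU2, Matrix.one_mul]
    have h : trace (diagonal lam * diagonal lam) = trace (T * T) := by
      rw [e1, Matrix.trace_mul_comm, Matrix.mul_assoc (T*T) U (star U), hU2, Matrix.mul_one]
    rw [hTT, ← h, diagonal_mul_diagonal, trace_diagonal]
    simp [sq]
  set v := hT'.eigenvectorBasis with hv
  have hTv : ∀ j, toEuclideanCLM (𝕜 := ℝ) T (v j) = lam j • v j := by
    intro j
    have h := ofLp_toEuclideanCLM (𝕜 := ℝ) T (v j)
    apply WithLp.ofLp_injective 2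
    rw [h, hT'.mulVec_eigenvectorBasis]
    simp
    rfl
  set A := T.trace • T - T * T with hA
  have hAH : star A = A := by
    simp [hA, star_sub, star_smul, Matrix.star_eq_conjTranspose, conjTranspose_mul, hT'.eq, hT.eq]
  have hAv : ∀ j, toEuclideanCLM (𝕜 := ℝ) A (v j)
      = (T.trace * lam j - lam j ^ 2) • v j := by
    intro j
    rw [hA, map_sub, _root_.map_smul, _root_.map_mul]
    rw [ContinuousLinearMap.sub_apply, ContinuousLinearMap.smul_apply,
      ContinuousLinearMap.mul_apply, hTv, _root_.map_smul, hTv, smul_smul, sub_smul, smul_smul,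
      sq]
  have hsa : _root_.IsSelfAdjoint (toEuclideanCLM (𝕜 := ℝ) A) := by
    show star _ = _
    rw [← map_star, hAH]
  have hrep : ∀ (x : EuclideanSpace ℝ (Fin n)) (i : Fin n),
      v.repr (toEuclideanCLM (𝕜 := ℝ) A x) i
        = (T.trace * lam i - lam i ^ 2) * v.repr x i := by
    intro x i
    rw [OrthonormalBasis.repr_apply_apply, OrthonormalBasis.repr_apply_apply,
      ← ContinuousLinearMap.adjoint_inner_left, hsa.adjoint_eq, hAv, real_inner_smul_left]
  set C := Real.sqrt ((n : ℝ) - 1) / 2 * ∑ i, lam i ^ 2 with hC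
  have hC0 : 0 ≤ C := by
    apply mul_nonneg (by positivity)
    exact Finset.sum_nonneg fun i _ => sq_nonneg _
  have hbound : ∀ i, |T.trace * lam i - lam i ^ 2| ≤ C := by
    intro i
    rw [tr1]; exact key_ineq lam i
  rw [tr2]
  apply ContinuousLinearMap.opNorm_le_bound _ hC0
  intro x
  have hnorm : ∀ y : EuclideanSpace ℝ (Fin n),
      ‖y‖ = Real.sqrt (∑ i, (v.repr y i) ^ 2) := by
    intro y
    rw [← v.repr.norm_map y, EuclideanSpace.norm_eq]
    congr 1
    exact Finset.sum_congr rfl fun i _ => by rw [Real.norm_eq_abs, sq_abs]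
  rw [hnorm, hnorm]
  calc Real.sqrt (∑ i, (v.repr (toEuclideanCLM (𝕜 := ℝ) A x) i) ^ 2)
      = Real.sqrt (∑ i, ((T.trace * lam i - lam i ^ 2) * v.repr x i) ^ 2) := by
        congr 1; exact Finset.sum_congr rfl fun i _ => by rw [hrep]
    _ ≤ Real.sqrt (∑ i, C ^ 2 * (v.repr x i) ^ 2) := by
        apply Real.sqrt_le_sqrt
        apply Finset.sum_le_sum
        intro i _
        rw [mul_pow]
        apply mul_le_mul_of_nonneg_right _ (sq_nonneg _)
        have h := hbound i
        calc (T.trace * lam i - lam i ^ 2) ^ 2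
            = |T.trace * lam i - lam i ^ 2| ^ 2 := (sq_abs _).symm
          _ ≤ C ^ 2 := pow_le_pow_left₀ (abs_nonneg _) h 2
    _ = C * Real.sqrt (∑ i, (v.repr x i) ^ 2) := by
        rw [← Finset.mul_sum, Real.sqrt_mul (sq_nonneg C), Real.sqrt_sq hC0]
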